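/- Let s ≥ 1 be an integer and let c_1 < … < c_s be the s Gauss points in (0,1), i.e. the roots of the s-th derivative of (X(X−1))^s. Then the associated s-stage Runge–Kutta collocation method is A-stable: for every λ ∈ ℂ with Re(λ) ≤ 0 at which I − λA is invertible, |R(λ)| ≤ 1. -/

import Mathlib

open Polynomial Matrix MeasureTheory

noncomputable section

/-- Lagrange basis function `ℓ_i(t) = ∏_{j≠i} (t - c_j)/(c_i - c_j)`. -/
def lagrangeFun (s : ℕ) (c : Fin s → ℝ) (i : Fin s) (t : ℝ) : ℝ :=
  ∏ j ∈ Finset.univ.erase i, (t - c j) / (c i - c j)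

/-- Coefficient matrix `A` of the collocation method: `a_{ij} = ∫_0^{c_i} ℓ_j`. -/
def collocA (s : ℕ) (c : Fin s → ℝ) : Matrix (Fin s) (Fin s) ℝ :=
  Matrix.of fun i j => ∫ t in (0:ℝ)..(c i), lagrangeFun s c j t

/-- Weight vector `b` of the collocation method: `b_i = ∫_0^1 ℓ_i`. -/
def collocB (s : ℕ) (c : Fin s → ℝ) : Fin s → ℝ :=
  fun i => ∫ t in (0:ℝ)..(1:ℝ), lagrangeFun s c i t

/-- `π = ∏ (X - c_i)`. -/
def piPoly (s : ℕ) (c : Fin s → ℝ) : Polynomial ℝ :=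
  ∏ i : Fin s, (Polynomial.X - Polynomial.C (c i))

/-- The linear map `τ` sending `Σ a_k X^k` to `Σ k! a_k X^k`. -/
def tauP (p : Polynomial ℝ) : Polynomial ℝ :=
  ∑ k ∈ p.support, Polynomial.C ((k.factorial : ℝ) * p.coeff k) * Polynomial.X ^ k

/-- The matrix `A` viewed as a complex matrix. -/
def collocAC (s : ℕ) (c : Fin s → ℝ) : Matrix (Fin s) (Fin s) ℂ :=
  (collocA s c).map (fun x => (x : ℂ))

/-- The weight vector `b` viewed as a complex vector. -/
def collocBC (s : ℕ) (c : Fin s → ℝ) : Fin s → ℂ :=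
  fun i => (collocB s c i : ℂ)

/-- The linear stability function `R(λ) = 1 + λ bᵀ (I - λ A)⁻¹ 𝟙`. -/
def stabR (s : ℕ) (c : Fin s → ℝ) (lam : ℂ) : ℂ :=
  1 + lam * (collocBC s c ⬝ᵥ ((1 - lam • collocAC s c)⁻¹ *ᵥ (fun _ => 1)))

/-- A-stability: `|R(λ)| ≤ 1` on the closed left half-plane (where defined). -/
def AStable (s : ℕ) (c : Fin s → ℝ) : Prop :=
  ∀ lam : ℂ, lam.re ≤ 0 → IsUnit (1 - lam • collocAC s c).det →
    ‖stabR s c lam‖ ≤ 1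

/-- I-stability: `|R(λ)| ≤ 1` on the imaginary axis (where defined). -/
def IStable (s : ℕ) (c : Fin s → ℝ) : Prop :=
  ∀ lam : ℂ, lam.re = 0 → IsUnit (1 - lam • collocAC s c).det →
    ‖stabR s c lam‖ ≤ 1

/-- AS-stability: `I - λA` invertible on `ℂ⁻` and `λ bᵀ (I - λA)⁻¹` uniformly bounded there. -/
def ASStable (s : ℕ) (c : Fin s → ℝ) : Prop :=
  (∀ lam : ℂ, lam.re ≤ 0 → IsUnit (1 - lam • collocAC s c).det) ∧
  ∃ M : ℝ, ∀ lam : ℂ, lam.re ≤ 0 → ∀ j,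
    ‖lam * (collocBC s c ᵥ* (1 - lam • collocAC s c)⁻¹) j‖ ≤ M

/-- ASI-stability: `I - λA` invertible on `ℂ⁻` and `(I - λA)⁻¹` uniformly bounded there. -/
def ASIStable (s : ℕ) (c : Fin s → ℝ) : Prop :=
  (∀ lam : ℂ, lam.re ≤ 0 → IsUnit (1 - lam • collocAC s c).det) ∧
  ∃ M : ℝ, ∀ lam : ℂ, lam.re ≤ 0 → ∀ i j,
    ‖(1 - lam • collocAC s c)⁻¹ i j‖ ≤ M

/-- IS-stability: `I - λA` invertible on `iℝ` and `λ bᵀ (I - λA)⁻¹` uniformly bounded there. -/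
def ISStable (s : ℕ) (c : Fin s → ℝ) : Prop :=
  (∀ lam : ℂ, lam.re = 0 → IsUnit (1 - lam • collocAC s c).det) ∧
  ∃ M : ℝ, ∀ lam : ℂ, lam.re = 0 → ∀ j,
    ‖lam * (collocBC s c ᵥ* (1 - lam • collocAC s c)⁻¹) j‖ ≤ M

/-- ISI-stability: `I - λA` invertible on `iℝ` and `(I - λA)⁻¹` uniformly bounded there. -/
def ISIStable (s : ℕ) (c : Fin s → ℝ) : Prop :=
  (∀ lam : ℂ, lam.re = 0 → IsUnit (1 - lam • collocAC s c).det) ∧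
  ∃ M : ℝ, ∀ lam : ℂ, lam.re = 0 → ∀ i j,
    ‖(1 - lam • collocAC s c)⁻¹ i j‖ ≤ M

end


noncomputable section GaussProof
open intervalIntegral



/-- FTC for polynomials. -/
lemma polyFTC (p : ℝ[X]) (a b : ℝ) :
    ∫ t in a..b, eval t (derivative p) = eval b p - eval a p := by
  apply intervalIntegral.integral_deriv_eq_sub' (fun x => eval x p)
  · funext x; exact p.deriv
  · intro x _; exact p.differentiableAt
  · exact (derivative p).continuousOn

/-- Polynomial antiderivative. -/
def pInt (p : ℝ[X]) : ℝ[X] := p.sum fun n a => C (a / (n + 1)) * X ^ (n + 1)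

lemma derivative_pInt (p : ℝ[X]) : derivative (pInt p) = p := by
  unfold pInt
  rw [Polynomial.sum, map_sum]
  conv_rhs => rw [← Polynomial.sum_C_mul_X_pow_eq p, Polynomial.sum]
  refine Finset.sum_congr rfl fun n _ => ?_
  rw [derivative_C_mul_X_pow]
  have : ((n : ℝ) + 1) ≠ 0 := by positivity
  push_cast
  rw [div_mul_cancel₀ _ this]

lemma eval_zero_pInt (p : ℝ[X]) : eval 0 (pInt p) = 0 := by
  unfold pInt
  rw [Polynomial.sum, eval_finset_sum]
  refine Finset.sum_eq_zero fun n _ => ?_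
  simp

lemma natDegree_pInt_le (p : ℝ[X]) : (pInt p).natDegree ≤ p.natDegree + 1 := by
  unfold pInt
  rw [Polynomial.sum]
  refine Polynomial.natDegree_sum_le_of_forall_le _ _ fun n hn => ?_
  refine (natDegree_C_mul_le _ _).trans ?_
  simp only [natDegree_C, natDegree_X_pow, zero_add]
  exact Nat.succ_le_succ (Polynomial.le_natDegree_of_mem_supp n hn)

lemma integral_eval_eq_pInt (p : ℝ[X]) (x : ℝ) :
    ∫ t in (0:ℝ)..x, eval t p = eval x (pInt p) := by
  have := polyFTC (pInt p) 0 x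
  rw [derivative_pInt, eval_zero_pInt, sub_zero] at this
  exact this



lemma polyII (p : ℝ[X]) (a b : ℝ) :
    IntervalIntegrable (fun t => eval t p) MeasureTheory.volume a b :=
  p.continuous.intervalIntegrable _ _

/-- Integration by parts when `p` vanishes at the endpoints. -/
lemma polyIBP (p q : ℝ[X]) (hp0 : eval 0 p = 0) (hp1 : eval 1 p = 0) :
    ∫ t in (0:ℝ)..1, eval t (derivative p) * eval t q
      = - ∫ t in (0:ℝ)..1, eval t p * eval t (derivative q) := by
  have h := polyFTC (p * q) 0 1
  rw [eval_mul, eval_mul, hp0, hp1, zero_mul, zero_mul, sub_zero] at h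
  have hrw : (fun t => eval t (derivative (p * q)))
      = fun t => eval t (derivative p) * eval t q + eval t p * eval t (derivative q) := by
    funext t; rw [derivative_mul]; simp [eval_add, eval_mul]
  rw [hrw] at h
  rw [intervalIntegral.integral_add (f := fun t => eval t (derivative p) * eval t q)
    (g := fun t => eval t p * eval t (derivative q))
    ((((derivative p).continuous.mul q.continuous).intervalIntegrable _ _))
    ((p.continuous.mul (derivative q).continuous).intervalIntegrable _ _)] at h
  linarith

/-- If `k < n` and `(X - C a)^n ∣ p`, iterated derivatives up to `k` vanish at `a`. -/
lemma eval_iterate_deriv_zero {p : ℝ[X]} {a : ℝ} {n k : ℕ} (hp : p ≠ 0)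
    (hdvd : (X - C a) ^ n ∣ p) (hk : k < n) :
    eval a (derivative^[k] p) = 0 := by
  have hmul : n ≤ p.rootMultiplicity a := (Polynomial.le_rootMultiplicity_iff hp).mpr hdvd
  exact Polynomial.isRoot_iterate_derivative_of_lt_rootMultiplicity (lt_of_lt_of_le hk hmul)

section Orth
variable (s : ℕ)

/-- `Q = (X(X-1))^s`. -/
def QP : ℝ[X] := (X * (X - 1)) ^ s

lemma QP_ne_zero : QP s ≠ 0 := by
  apply pow_ne_zero
  intro h
  have := congrArg (eval 2) h
  norm_num at this

lemma eval_iterate_QP {k : ℕ} (hk : k < s) (a : ℝ) (ha : a = 0 ∨ a = 1) :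
    eval a (derivative^[k] (QP s)) = 0 := by
  apply eval_iterate_deriv_zero (QP_ne_zero s) _ hk
  rcases ha with rfl | rfl
  · rw [show ((X : ℝ[X]) - C 0) = X by simp]
    exact ⟨(X - 1) ^ s, by rw [QP, mul_pow]⟩
  · exact ⟨X ^ s, by rw [QP, mul_pow, mul_comm, C_1]⟩

lemma orth_aux : ∀ m k : ℕ, m + k ≤ s → ∀ q : ℝ[X], derivative^[m] q = 0 →
    ∫ t in (0:ℝ)..1, eval t (derivative^[m + k] (QP s)) * eval t q = 0 := by
  intro m
  induction m with
  | zero =>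
    intro k _ q hq
    simp only [Function.iterate_zero_apply] at hq
    simp [hq]
  | succ m ih =>
    intro k hk q hq
    have h1 : derivative^[m + 1 + k] (QP s) = derivative (derivative^[m + k] (QP s)) := by
      rw [show m + 1 + k = (m + k) + 1 by omega, Function.iterate_succ_apply']
    rw [h1, polyIBP _ _ (eval_iterate_QP s (by omega) 0 (Or.inl rfl))
      (eval_iterate_QP s (by omega) 1 (Or.inr rfl))]
    have h2 : derivative^[m] (derivative q) = 0 := by
      rw [← Function.iterate_succ_apply]; exact hq
    rw [ih k (by omega) _ h2, neg_zero]

end Orth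


section Aux
variable {s : ℕ} {c : Fin s → ℝ}

/-- derivative^[k] p = 0 implies p = 0 or small degree. -/
lemma degree_lt_of_iterate_deriv_zero :
    ∀ (k : ℕ) (p : ℝ[X]), derivative^[k] p = 0 → p = 0 ∨ p.natDegree < k := by
  intro k
  induction k with
  | zero => intro p hp; exact Or.inl hp
  | succ k ih =>
    intro p hp
    rcases eq_or_ne p 0 with rfl | hp0
    · exact Or.inl rfl
    rcases eq_or_ne p.natDegree 0 with hd | hd
    · exact Or.inr (by omega)
    right
    rw [Function.iterate_succ_apply] at hp
    rcases ih (derivative p) hp with h | h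
    · exfalso
      exact hd (Polynomial.natDegree_eq_zero_of_derivative_eq_zero h)
    · have hle : p.natDegree - 1 ≤ (derivative p).natDegree := by
        apply Polynomial.le_natDegree_of_ne_zero
        rw [Polynomial.coeff_derivative]
        have h1 : p.natDegree - 1 + 1 = p.natDegree := by omega
        rw [h1]
        have : p.coeff p.natDegree ≠ 0 := by
          rw [← Polynomial.leadingCoeff]
          exact Polynomial.leadingCoeff_ne_zero.mpr hp0
        positivity
      omega

lemma piPoly_monic : (piPoly s c).Monic :=
  Polynomial.monic_prod_of_monic _ _ fun i _ => Polynomial.monic_X_sub_C (c i)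

lemma natDegree_piPoly : (piPoly s c).natDegree = s := by
  rw [piPoly, Polynomial.natDegree_prod _ _ fun i _ => Polynomial.X_sub_C_ne_zero (c i)]
  simp

lemma eval_piPoly_root (i : Fin s) : eval (c i) (piPoly s c) = 0 := by
  rw [piPoly, eval_prod]
  exact Finset.prod_eq_zero (Finset.mem_univ i) (by simp)

end Aux


section Main
variable {s : ℕ} {c : Fin s → ℝ}

lemma natDegree_QP : (QP s).natDegree = 2 * s := by
  have h1 : ((X : ℝ[X]) * (X - 1)).natDegree = 2 := by
    have h : ((X : ℝ[X]) - 1) = X - C 1 := by simp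
    rw [h, natDegree_mul X_ne_zero (X_sub_C_ne_zero 1), natDegree_X, natDegree_X_sub_C]
  rw [QP, natDegree_pow, h1, mul_comm]

lemma PP_ne_zero (hs : 1 ≤ s) : derivative^[s] (QP s) ≠ 0 := by
  intro h
  rcases degree_lt_of_iterate_deriv_zero s (QP s) h with h0 | hlt
  · exact QP_ne_zero s h0
  · rw [natDegree_QP] at hlt; omega

lemma exists_K (hs : 1 ≤ s) (hc : StrictMono c)
    (hroots : ∀ i, (derivative^[s] (QP s)).IsRoot (c i)) :
    ∃ K : ℝ, K ≠ 0 ∧ derivative^[s] (QP s) = piPoly s c * C K := by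
  set P := derivative^[s] (QP s) with hP
  set π := piPoly s c with hpi
  have hmonic : π.Monic := piPoly_monic
  have hr0 : P %ₘ π = 0 := by
    by_cases h0 : P %ₘ π = 0
    · exact h0
    have hsub : P %ₘ π = P - π * (P /ₘ π) := Polynomial.modByMonic_eq_sub_mul_div P π
    have heval : ∀ i, eval (c i) (P %ₘ π) = 0 := by
      intro i
      rw [hsub]
      simp only [hsub, eval_sub, eval_mul]
      rw [show eval (c i) π = 0 from eval_piPoly_root i, (hroots i).eq_zero]
      ring
    have hdeg : (P %ₘ π).natDegree < s := by
      have h1 := Polynomial.degree_modByMonic_lt P hmonic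
      have h2 := Polynomial.natDegree_lt_natDegree h0 h1
      rwa [natDegree_piPoly] at h2
    exact Polynomial.eq_zero_of_natDegree_lt_card_of_eval_eq_zero (P %ₘ π) hc.injective
      heval (by simpa using hdeg)
  have hfac : P = π * (P /ₘ π) := by
    have := Polynomial.modByMonic_add_div P π
    rw [hr0, zero_add] at this
    exact this.symm
  have hPne : P ≠ 0 := PP_ne_zero hs
  have hndP : P.natDegree = s := by
    have hle : P.natDegree ≤ s := by
      have := Polynomial.natDegree_iterate_derivative (QP s) s
      rwa [natDegree_QP, show 2 * s - s = s by omega] at this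
    have hge : s ≤ P.natDegree := by
      have : π ∣ P := ⟨P /ₘ π, hfac⟩
      have := Polynomial.natDegree_le_of_dvd this hPne
      rwa [natDegree_piPoly] at this
    omega
  have hg0 : (P /ₘ π).natDegree = 0 := by
    rw [Polynomial.natDegree_divByMonic P hmonic, hndP, natDegree_piPoly]
    omega
  refine ⟨(P /ₘ π).coeff 0, ?_, ?_⟩
  · intro h
    apply hPne
    rw [hfac, Polynomial.eq_C_of_natDegree_eq_zero hg0, h]
    simp
  · conv_lhs => rw [hfac, Polynomial.eq_C_of_natDegree_eq_zero hg0]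

lemma orth_piPoly (hs : 1 ≤ s) (hc : StrictMono c)
    (hroots : ∀ i, (derivative^[s] (QP s)).IsRoot (c i))
    (q : ℝ[X]) (hq : q.natDegree < s) :
    ∫ t in (0:ℝ)..1, eval t (piPoly s c) * eval t q = 0 := by
  obtain ⟨K, hK, hfac⟩ := exists_K hs hc hroots
  have h := orth_aux s s 0 (by omega) q (Polynomial.iterate_derivative_eq_zero hq)
  rw [show s + 0 = s by omega, hfac] at h
  have hrw : (fun t => eval t (piPoly s c * C K) * eval t q)
      = fun t => (eval t (piPoly s c) * eval t q) * K := by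
    funext t; simp [eval_mul]; ring
  rw [hrw, intervalIntegral.integral_mul_const] at h
  exact (mul_eq_zero.mp h).resolve_right hK

end Main


section Quad
variable {s : ℕ} {c : Fin s → ℝ}

def lagPoly (s : ℕ) (c : Fin s → ℝ) (i : Fin s) : ℝ[X] :=
  Lagrange.basis Finset.univ c i

lemma lagrangeFun_eq_eval (i : Fin s) (t : ℝ) :
    lagrangeFun s c i t = eval t (lagPoly s c i) := by
  rw [lagrangeFun, lagPoly, Lagrange.basis, eval_prod]
  refine Finset.prod_congr rfl fun j _ => ?_
  rw [Lagrange.basisDivisor, eval_mul, eval_C, eval_sub, eval_X, eval_C, div_eq_inv_mul]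

lemma injOn_c (hc : StrictMono c) : Set.InjOn c ↑(Finset.univ : Finset (Fin s)) :=
  fun a _ b _ h => hc.injective h

lemma eval_lagPoly_self (hc : StrictMono c) (i : Fin s) :
    eval (c i) (lagPoly s c i) = 1 :=
  Lagrange.eval_basis_self (injOn_c hc) (Finset.mem_univ i)

lemma eval_lagPoly_ne {i j : Fin s} (h : i ≠ j) :
    eval (c j) (lagPoly s c i) = 0 :=
  Lagrange.eval_basis_of_ne h (Finset.mem_univ j)

lemma natDegree_lagPoly (hc : StrictMono c) (i : Fin s) :
    (lagPoly s c i).natDegree = s - 1 := by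
  rw [lagPoly, Lagrange.natDegree_basis (injOn_c hc) (Finset.mem_univ i)]
  simp

lemma integral_lagPoly (i : Fin s) :
    ∫ t in (0:ℝ)..1, eval t (lagPoly s c i) = collocB s c i := by
  rw [collocB]
  refine intervalIntegral.integral_congr fun t _ => ?_
  exact (lagrangeFun_eq_eval i t).symm

lemma collocB_eq (i : Fin s) : collocB s c i = eval 1 (pInt (lagPoly s c i)) := by
  rw [← integral_lagPoly, integral_eval_eq_pInt]

lemma collocA_eq (i j : Fin s) : collocA s c i j = eval (c i) (pInt (lagPoly s c j)) := by
  rw [collocA]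
  show (∫ t in (0:ℝ)..(c i), lagrangeFun s c j t) = _
  rw [← integral_eval_eq_pInt]
  exact intervalIntegral.integral_congr fun t _ => lagrangeFun_eq_eval j t

lemma quadrature (hs : 1 ≤ s) (hc : StrictMono c)
    (hroots : ∀ i, (derivative^[s] (QP s)).IsRoot (c i))
    (p : ℝ[X]) (hp : p.natDegree ≤ 2 * s - 1) :
    ∫ t in (0:ℝ)..1, eval t p = ∑ i, eval (c i) p * collocB s c i := by
  set π := piPoly s c with hπ
  have hmonic : π.Monic := piPoly_monic
  have hsplit : p = p %ₘ π + π * (p /ₘ π) := (Polynomial.modByMonic_add_div p π).symm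
  have h1 : ∫ t in (0:ℝ)..1, eval t p
      = (∫ t in (0:ℝ)..1, eval t (p %ₘ π))
        + ∫ t in (0:ℝ)..1, eval t π * eval t (p /ₘ π) := by
    rw [← intervalIntegral.integral_add (polyII _ _ _)
      (g := fun t => eval t π * eval t (p /ₘ π))
      ((π.continuous.mul (p /ₘ π).continuous).intervalIntegrable _ _)]
    refine intervalIntegral.integral_congr fun t _ => ?_
    conv_lhs => rw [hsplit]
    simp [eval_add, eval_mul]
  have h2 : ∫ t in (0:ℝ)..1, eval t π * eval t (p /ₘ π) = 0 := by
    apply orth_piPoly hs hc hroots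
    rw [Polynomial.natDegree_divByMonic p hmonic, hπ, natDegree_piPoly]
    omega
  set r := p %ₘ π with hr
  have hdegr : r.degree < ((Finset.univ : Finset (Fin s)).card : WithBot ℕ) := by
    have h3 := Polynomial.degree_modByMonic_lt p hmonic
    rw [Polynomial.degree_eq_natDegree hmonic.ne_zero, natDegree_piPoly] at h3
    simpa using h3
  have hinterp : r = ∑ i, C (eval (c i) r) * lagPoly s c i := by
    have h4 := Lagrange.eq_interpolate (injOn_c hc) hdegr
    rwa [Lagrange.interpolate_apply] at h4
  have h5 : ∫ t in (0:ℝ)..1, eval t r = ∑ i, eval (c i) r * collocB s c i := by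
    rw [show (∫ t in (0:ℝ)..1, eval t r)
        = ∫ t in (0:ℝ)..1, ∑ i, eval t (C (eval (c i) r) * lagPoly s c i) from
      intervalIntegral.integral_congr fun t _ => by conv_lhs => rw [hinterp, eval_finset_sum]]
    rw [intervalIntegral.integral_finset_sum (fun i _ =>
      ((C (eval (c i) r) * lagPoly s c i).continuous.intervalIntegrable _ _))]
    refine Finset.sum_congr rfl fun i _ => ?_
    have : (fun t => eval t (C (eval (c i) r) * lagPoly s c i))
        = fun t => eval (c i) r * eval t (lagPoly s c i) := by
      funext t; simp [eval_mul]
    rw [this, intervalIntegral.integral_const_mul, integral_lagPoly]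
  have h6 : ∀ i, eval (c i) r = eval (c i) p := by
    intro i
    conv_rhs => rw [hsplit]
    simp [eval_add, eval_mul, show eval (c i) π = 0 from eval_piPoly_root i]
  rw [h1, h2, add_zero, h5]
  exact Finset.sum_congr rfl fun i _ => by rw [h6 i]

lemma collocB_nonneg (hs : 1 ≤ s) (hc : StrictMono c)
    (hroots : ∀ i, (derivative^[s] (QP s)).IsRoot (c i)) (i : Fin s) :
    0 ≤ collocB s c i := by
  have hdeg : (lagPoly s c i * lagPoly s c i).natDegree ≤ 2 * s - 1 := by
    refine (Polynomial.natDegree_mul_le).trans ?_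
    rw [natDegree_lagPoly hc]
    omega
  have hq := quadrature hs hc hroots _ hdeg
  have hsum : ∑ k, eval (c k) (lagPoly s c i * lagPoly s c i) * collocB s c k
      = collocB s c i := by
    rw [Finset.sum_eq_single i]
    · rw [eval_mul, eval_lagPoly_self hc, one_mul, one_mul]
    · intro k _ hk
      rw [eval_mul, eval_lagPoly_ne (Ne.symm hk)]
      ring
    · intro h; exact absurd (Finset.mem_univ i) h
  rw [hsum] at hq
  rw [← hq]
  apply intervalIntegral.integral_nonneg zero_le_one
  intro t _
  rw [eval_mul]
  exact mul_self_nonneg _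

lemma quad_lag_pInt (hs : 1 ≤ s) (hc : StrictMono c)
    (hroots : ∀ i, (derivative^[s] (QP s)).IsRoot (c i)) (i j : Fin s) :
    ∫ t in (0:ℝ)..1, eval t (lagPoly s c i * pInt (lagPoly s c j))
      = collocA s c i j * collocB s c i := by
  have hdeg : (lagPoly s c i * pInt (lagPoly s c j)).natDegree ≤ 2 * s - 1 := by
    refine (Polynomial.natDegree_mul_le).trans ?_
    have h1 := natDegree_lagPoly hc i
    have h2 := natDegree_pInt_le (lagPoly s c j)
    rw [natDegree_lagPoly hc j] at h2
    omega
  rw [quadrature hs hc hroots _ hdeg, Finset.sum_eq_single i]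
  · rw [eval_mul, eval_lagPoly_self hc, one_mul, collocA_eq]
  · intro k _ hk
    rw [eval_mul, eval_lagPoly_ne (Ne.symm hk)]
    ring
  · intro h; exact absurd (Finset.mem_univ i) h

lemma M_identity (hs : 1 ≤ s) (hc : StrictMono c)
    (hroots : ∀ i, (derivative^[s] (QP s)).IsRoot (c i)) (i j : Fin s) :
    collocB s c i * collocA s c i j + collocB s c j * collocA s c j i
      = collocB s c i * collocB s c j := by
  set Li := pInt (lagPoly s c i) with hLi
  set Lj := pInt (lagPoly s c j) with hLj
  have hftc := polyFTC (Li * Lj) 0 1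
  rw [eval_mul, eval_mul, eval_zero_pInt, eval_zero_pInt, mul_zero, sub_zero,
    ← collocB_eq, ← collocB_eq] at hftc
  have hder : derivative (Li * Lj) = lagPoly s c i * Lj + lagPoly s c j * Li := by
    rw [derivative_mul, hLi, hLj, derivative_pInt, derivative_pInt]
    ring
  rw [hder] at hftc
  have hsplit : ∫ t in (0:ℝ)..1, eval t (lagPoly s c i * Lj + lagPoly s c j * Li)
      = (∫ t in (0:ℝ)..1, eval t (lagPoly s c i * Lj))
        + ∫ t in (0:ℝ)..1, eval t (lagPoly s c j * Li) := by
    rw [← intervalIntegral.integral_add (polyII _ _ _) (polyII _ _ _)]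
    refine intervalIntegral.integral_congr fun t _ => ?_
    simp [eval_add]
  rw [hsplit, quad_lag_pInt hs hc hroots i j, quad_lag_pInt hs hc hroots j i] at hftc
  linarith

end Quad

end GaussProof

/-- the collocation Runge--Kutta method at the `s` Gauss points is `A`-stable. -/
theorem gauss_AStable (s : ℕ) (hs : 1 ≤ s) (c : Fin s → ℝ) (hc : StrictMono c)
    (hmem : ∀ i, c i ∈ Set.Ioo (0:ℝ) 1)
    (hroots : ∀ i, (Polynomial.derivative^[s]
      ((Polynomial.X * (Polynomial.X - 1)) ^ s : Polynomial ℝ)).IsRoot (c i)) :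
    AStable s c := by
  have hroots' : ∀ i, (derivative^[s] (QP s)).IsRoot (c i) := hroots
  have hbnn : ∀ i, 0 ≤ collocB s c i := collocB_nonneg hs hc hroots'
  have hM := M_identity hs hc hroots'
  intro lam hre hdet
  set b : Fin s → ℝ := collocB s c with hb
  set A : Matrix (Fin s) (Fin s) ℝ := collocA s c with hA
  set u : Fin s → ℂ := (1 - lam • collocAC s c)⁻¹ *ᵥ (fun _ => 1) with hu
  set cj : ℂ →+* ℂ := starRingEnd ℂ with hcj
  have hNu : (1 - lam • collocAC s c) *ᵥ u = fun _ => 1 := by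
    rw [hu, Matrix.mulVec_mulVec, Matrix.mul_nonsing_inv _ hdet, Matrix.one_mulVec]
  have hueq : ∀ i, u i - lam * ∑ j, ((A i j : ℝ) : ℂ) * u j = 1 := by
    intro i
    have h := congrFun hNu i
    simp only [Matrix.mulVec, dotProduct, Matrix.sub_apply, Matrix.smul_apply,
      Matrix.one_apply, smul_eq_mul, sub_mul, ite_mul, one_mul, zero_mul,
      Finset.sum_sub_distrib, Finset.sum_ite_eq, Finset.mem_univ, if_pos] at h
    rw [← h]
    congr 1
    rw [Finset.mul_sum]
    refine Finset.sum_congr rfl fun j _ => ?_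
    rw [collocAC, hA]
    simp only [Matrix.map_apply]
    ring
  set B : ℂ := ∑ i, ((b i : ℝ) : ℂ) * u i with hB
  set K : ℝ := ∑ i, b i * Complex.normSq (u i) with hK
  set S : ℂ := ∑ i, ∑ j, ((b i * A i j : ℝ) : ℂ) * (u i * cj (u j)) with hS
  set S' : ℂ := ∑ i, ∑ j, ((b i * A i j : ℝ) : ℂ) * (cj (u i) * u j) with hS'
  have hBconj : cj B = ∑ i, ((b i : ℝ) : ℂ) * cj (u i) := by
    rw [hB, map_sum]
    refine Finset.sum_congr rfl fun i _ => ?_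
    rw [_root_.map_mul, hcj, Complex.conj_ofReal]
  have e1 : ∀ i, lam * (((b i : ℝ) : ℂ) * u i)
      = lam * (((b i : ℝ) : ℂ) * (u i * cj (u i)))
        - (lam * cj lam) * ∑ j, ((b i * A i j : ℝ) : ℂ) * (u i * cj (u j)) := by
    intro i
    have hE' : cj (u i) - cj lam * ∑ j, ((A i j : ℝ) : ℂ) * cj (u j) = 1 := by
      have h := congrArg cj (hueq i)
      simpa only [map_sub, _root_.map_mul, map_sum, hcj, Complex.conj_ofReal,
        _root_.map_one] using h
    have hsum : (lam * cj lam) * ∑ j, ((b i * A i j : ℝ) : ℂ) * (u i * cj (u j))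
        = lam * (((b i : ℝ) : ℂ) * u i) * (cj lam * ∑ j, ((A i j : ℝ) : ℂ) * cj (u j)) := by
      simp only [Finset.mul_sum]
      refine Finset.sum_congr rfl fun j _ => ?_
      push_cast
      ring
    linear_combination (-(lam * (((b i : ℝ) : ℂ) * u i))) * hE' + hsum
  have hKc : ((K : ℝ) : ℂ) = ∑ i, ((b i : ℝ) : ℂ) * (u i * cj (u i)) := by
    rw [hK]
    push_cast
    refine Finset.sum_congr rfl fun i _ => ?_
    rw [hcj, Complex.mul_conj]
  have h1 : lam * B = lam * ((K : ℝ) : ℂ) - (lam * cj lam) * S := by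
    rw [hB, hKc, hS, Finset.mul_sum, Finset.mul_sum, Finset.mul_sum, ← Finset.sum_sub_distrib]
    exact Finset.sum_congr rfl fun i _ => e1 i
  have e2 : ∀ i, cj lam * (((b i : ℝ) : ℂ) * cj (u i))
      = cj lam * (((b i : ℝ) : ℂ) * (u i * cj (u i)))
        - (lam * cj lam) * ∑ j, ((b i * A i j : ℝ) : ℂ) * (cj (u i) * u j) := by
    intro i
    have hsum2 : (lam * cj lam) * ∑ j, ((b i * A i j : ℝ) : ℂ) * (cj (u i) * u j)
        = cj lam * (((b i : ℝ) : ℂ) * cj (u i)) * (lam * ∑ j, ((A i j : ℝ) : ℂ) * u j) := by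
      simp only [Finset.mul_sum]
      refine Finset.sum_congr rfl fun j _ => ?_
      push_cast
      ring
    linear_combination (-(cj lam * (((b i : ℝ) : ℂ) * cj (u i)))) * (hueq i) + hsum2
  have h2 : cj lam * cj B = cj lam * ((K : ℝ) : ℂ) - (lam * cj lam) * S' := by
    rw [hBconj, hKc, hS', Finset.mul_sum, Finset.mul_sum, Finset.mul_sum,
      ← Finset.sum_sub_distrib]
    exact Finset.sum_congr rfl fun i _ => e2 i
  have h3 : S + S' = B * cj B := by
    have hswap : S' = ∑ i, ∑ j, ((b j * A j i : ℝ) : ℂ) * (u i * cj (u j)) := by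
      rw [hS', Finset.sum_comm]
      refine Finset.sum_congr rfl fun i _ => Finset.sum_congr rfl fun j _ => by ring
    rw [hswap, hS, ← Finset.sum_add_distrib]
    rw [hB, hBconj, Finset.sum_mul]
    refine Finset.sum_congr rfl fun i _ => ?_
    rw [← Finset.sum_add_distrib, Finset.mul_sum]
    refine Finset.sum_congr rfl fun j _ => ?_
    have hMij : b i * A i j + b j * A j i = b i * b j := hM i j
    have key : ((b i : ℝ) : ℂ) * ((A i j : ℝ) : ℂ) + ((b j : ℝ) : ℂ) * ((A j i : ℝ) : ℂ)
        = ((b i : ℝ) : ℂ) * ((b j : ℝ) : ℂ) := by exact_mod_cast hMij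
    push_cast
    linear_combination (u i * cj (u j)) * key
  have hRB : stabR s c lam = 1 + lam * B := by
    rw [stabR, hB]
    rfl
  have hnormsq : Complex.normSq (stabR s c lam) = 1 + 2 * lam.re * K := by
    have hmc : ((Complex.normSq (stabR s c lam) : ℝ) : ℂ)
        = stabR s c lam * cj (stabR s c lam) := (Complex.mul_conj _).symm
    rw [hRB] at hmc
    have hconjR : cj (1 + lam * B) = 1 + cj lam * cj B := by
      rw [map_add, _root_.map_one, _root_.map_mul]
    rw [hconjR] at hmc
    have hfinal : (1 + lam * B) * (1 + cj lam * cj B) = 1 + (lam + cj lam) * ((K : ℝ) : ℂ) := by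
      linear_combination h1 + h2 - lam * cj lam * h3
    rw [hfinal] at hmc
    have haddconj : lam + cj lam = ((2 * lam.re : ℝ) : ℂ) := by
      rw [hcj, Complex.add_conj]
    rw [haddconj] at hmc
    have h9 : ((Complex.normSq (1 + lam * B) : ℝ) : ℂ) = ((1 + 2 * lam.re * K : ℝ) : ℂ) := by
      rw [hmc]
      push_cast
      ring
    rw [hRB]
    exact_mod_cast h9
  have hKnn : 0 ≤ K := by
    rw [hK]
    exact Finset.sum_nonneg fun i _ => mul_nonneg (hbnn i) (Complex.normSq_nonneg _)
  have hle : Complex.normSq (stabR s c lam) ≤ 1 := by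
    rw [hnormsq]
    nlinarith
  calc ‖stabR s c lam‖ = Real.sqrt (Complex.normSq (stabR s c lam)) := rfl
    _ ≤ Real.sqrt 1 := Real.sqrt_le_sqrt hle
    _ = 1 := Real.sqrt_one
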